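/- Let H be a Hilbert space, (eᵢ)_{i∈ℕ} an orthonormal sequence, (λᵢ), (μᵢ) ∈ ℓ², and r₁, r₂ > 0 with ∑|λᵢ|² > r₁² and ∑|μᵢ|² > r₂². If x, y ∈ H satisfy ‖x − ∑λᵢeᵢ‖ ≤ r₁ and ‖y − ∑μᵢeᵢ‖ ≤ r₂, then |⟨x,y⟩ − ∑⟨x,eᵢ⟩⟨eᵢ,y⟩| ≤ (r₁r₂ / (√(∑|λᵢ|² − r₁²)·√(∑|μᵢ|² − r₂²)))·√(∑|⟨x,eᵢ⟩|²·∑|⟨y,eᵢ⟩|²). -/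

import Mathlib

open scoped InnerProductSpace ComplexConjugate

section Aux
variable {𝕜 E : Type*} [RCLike 𝕜] [NormedAddCommGroup E] [InnerProductSpace 𝕜 E]
  [CompleteSpace E] {e : ℕ → E}

lemma aux19_summable (he : Orthonormal 𝕜 e) {c : ℕ → 𝕜} (hc : Summable fun i => ‖c i‖ ^ 2) :
    Summable fun i => c i • e i := by
  have := (he.orthogonalFamily.summable_iff_norm_sq_summable c).mpr hc
  simpa [LinearIsometry.toSpanSingleton_apply] using this

lemma aux19_norm_sq (he : Orthonormal 𝕜 e) {c : ℕ → 𝕜} {w : E}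
    (hw : HasSum (fun i => c i • e i) w) :
    HasSum (fun i => ‖c i‖ ^ 2) (‖w‖ ^ 2) := by
  rw [HasSum]
  have h : ∀ s : Finset ℕ, ∑ i ∈ s, ‖c i‖ ^ 2 = ‖∑ i ∈ s, c i • e i‖ ^ 2 := by
    intro s
    have := he.orthogonalFamily.norm_sum c s
    simpa [LinearIsometry.toSpanSingleton_apply] using this.symm
  simp_rw [h]
  exact ((continuous_norm.pow 2).tendsto w).comp hw

lemma aux19_perp (he : Orthonormal 𝕜 e) {c : ℕ → 𝕜} {w : E}
    (hw : HasSum (fun i => c i • e i) w) {z : E} (hz : ∀ j, ⟪z, e j⟫_𝕜 = 0) :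
    ⟪z, w⟫_𝕜 = 0 := by
  have h := hw.mapL (innerSL 𝕜 z)
  simp only [innerSL_apply_apply, inner_smul_right, hz, mul_zero] at h
  simpa using h.unique hasSum_zero

lemma aux19_inner_tsum (he : Orthonormal 𝕜 e) {c : ℕ → 𝕜} {w : E}
    (hw : HasSum (fun i => c i • e i) w) (j : ℕ) : ⟪e j, w⟫_𝕜 = c j := by
  have h := hw.mapL (innerSL 𝕜 (e j))
  have h2 : (fun i => (innerSL 𝕜 (e j)) (c i • e i)) = fun i => if i = j then c j else 0 := by
    funext i
    rcases eq_or_ne i j with rfl | hij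
    · simp [inner_smul_right, he.1 i, inner_self_eq_norm_sq_to_K]
    · simp [inner_smul_right, he.2 (Ne.symm hij), hij]
  rw [h2] at h
  simpa using h.unique (hasSum_ite_eq j (c j))

/-- key real arithmetic: q² + d² ≤ r², S ≤ p + d, r² < S², 0 ≤ everything relevant →
    q * √(S² - r²) ≤ r * p -/
lemma aux19_real {q d S p r : ℝ} (hq : 0 ≤ q) (hd : 0 ≤ d) (hp : 0 ≤ p) (hr : 0 < r)
    (hS0 : 0 ≤ S)
    (h1 : q ^ 2 + d ^ 2 ≤ r ^ 2) (h2 : S ≤ p + d) (h3 : r ^ 2 < S ^ 2) :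
    q * Real.sqrt (S ^ 2 - r ^ 2) ≤ r * p := by
  have hS : 0 < S := by nlinarith
  have hkey : q ^ 2 * (S ^ 2 - r ^ 2) ≤ r ^ 2 * p ^ 2 := by
    have hdS : d < S := by nlinarith
    have e1 : q ^ 2 * (S ^ 2 - r ^ 2) ≤ (r ^ 2 - d ^ 2) * (S ^ 2 - r ^ 2) :=
      mul_le_mul_of_nonneg_right (by linarith) (by linarith)
    have e2 : (r ^ 2 - d ^ 2) * (S ^ 2 - r ^ 2) ≤ r ^ 2 * (S - d) ^ 2 := by
      nlinarith [sq_nonneg (r ^ 2 - d * S)]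
    have e3 : r ^ 2 * (S - d) ^ 2 ≤ r ^ 2 * p ^ 2 :=
      mul_le_mul_of_nonneg_left
        (pow_le_pow_left₀ (by linarith) (by linarith) 2) (sq_nonneg r)
    linarith
  calc q * Real.sqrt (S ^ 2 - r ^ 2) = Real.sqrt (q ^ 2 * (S ^ 2 - r ^ 2)) := by
        rw [Real.sqrt_mul (sq_nonneg q), Real.sqrt_sq hq]
    _ ≤ Real.sqrt (r ^ 2 * p ^ 2) := Real.sqrt_le_sqrt hkey
    _ = r * p := by
        rw [Real.sqrt_mul (sq_nonneg r), Real.sqrt_sq hr.le, Real.sqrt_sq hp]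

end Aux

theorem stmt_19 {𝕜 E : Type*} [RCLike 𝕜] [NormedAddCommGroup E] [InnerProductSpace 𝕜 E]
    [CompleteSpace E] (e : ℕ → E) (he : Orthonormal 𝕜 e) (l μ : ℕ → 𝕜)
    (hl : Summable fun i => ‖l i‖ ^ 2) (hμ : Summable fun i => ‖μ i‖ ^ 2)
    (r₁ r₂ : ℝ) (hr₁ : 0 < r₁) (hr₂ : 0 < r₂)
    (hlr : r₁ ^ 2 < ∑' i, ‖l i‖ ^ 2) (hμr : r₂ ^ 2 < ∑' i, ‖μ i‖ ^ 2)
    (s t : E) (hs : HasSum (fun i => l i • e i) s) (ht : HasSum (fun i => μ i • e i) t)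
    (x y : E) (hx : ‖x - s‖ ≤ r₁) (hy : ‖y - t‖ ≤ r₂) :
    ‖⟪x, y⟫_𝕜 - ∑' i, ⟪x, e i⟫_𝕜 * ⟪e i, y⟫_𝕜‖ ≤
      (r₁ * r₂ / (Real.sqrt ((∑' i, ‖l i‖ ^ 2) - r₁ ^ 2) *
        Real.sqrt ((∑' i, ‖μ i‖ ^ 2) - r₂ ^ 2))) *
        Real.sqrt ((∑' i, ‖⟪x, e i⟫_𝕜‖ ^ 2) * ∑' i, ‖⟪y, e i⟫_𝕜‖ ^ 2) := by
  -- the projections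
  have hbx : Summable fun i => ‖⟪e i, x⟫_𝕜‖ ^ 2 := he.inner_products_summable x
  have hby : Summable fun i => ‖⟪e i, y⟫_𝕜‖ ^ 2 := he.inner_products_summable y
  obtain ⟨px, hpx⟩ := (aux19_summable he hbx)
  obtain ⟨py, hpy⟩ := (aux19_summable he hby)
  -- orthogonality of x - px to all e j
  have hxperp : ∀ j, ⟪x - px, e j⟫_𝕜 = 0 := by
    intro j
    have h1 : ⟪e j, px⟫_𝕜 = ⟪e j, x⟫_𝕜 := aux19_inner_tsum he hpx j
    have h2 : ⟪x - px, e j⟫_𝕜 = conj (⟪e j, x⟫_𝕜 - ⟪e j, px⟫_𝕜) := by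
      rw [map_sub, inner_conj_symm, inner_conj_symm, inner_sub_left]
    rw [h2, h1, sub_self, map_zero]
  have hyperp : ∀ j, ⟪y - py, e j⟫_𝕜 = 0 := by
    intro j
    have h1 : ⟪e j, py⟫_𝕜 = ⟪e j, y⟫_𝕜 := aux19_inner_tsum he hpy j
    have h2 : ⟪y - py, e j⟫_𝕜 = conj (⟪e j, y⟫_𝕜 - ⟪e j, py⟫_𝕜) := by
      rw [map_sub, inner_conj_symm, inner_conj_symm, inner_sub_left]
    rw [h2, h1, sub_self, map_zero]
  -- the tsum in the statement equals ⟪px, y⟫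
  have htsum : ∑' i, ⟪x, e i⟫_𝕜 * ⟪e i, y⟫_𝕜 = ⟪px, y⟫_𝕜 := by
    have h1 : HasSum (fun i => ⟪y, (⟪e i, x⟫_𝕜) • e i⟫_𝕜) ⟪y, px⟫_𝕜 := hpx.mapL (innerSL 𝕜 y)
    have h2 := h1.star
    have h3 : (fun i => star ⟪y, (⟪e i, x⟫_𝕜) • e i⟫_𝕜) =
        fun i => ⟪x, e i⟫_𝕜 * ⟪e i, y⟫_𝕜 := by
      funext i
      simp only [inner_smul_right, star_mul', RCLike.star_def, inner_conj_symm]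
    rw [h3] at h2
    rw [h2.tsum_eq, RCLike.star_def, inner_conj_symm]
  -- LHS = ‖⟪x - px, y - py⟫‖
  have hLHS : ⟪x, y⟫_𝕜 - ∑' i, ⟪x, e i⟫_𝕜 * ⟪e i, y⟫_𝕜 = ⟪x - px, y - py⟫_𝕜 := by
    rw [htsum, inner_sub_right, inner_sub_left, aux19_perp he hpy hxperp, sub_zero,
      ← inner_sub_left]
  -- norms of projections
  have hnx : ‖px‖ ^ 2 = ∑' i, ‖⟪x, e i⟫_𝕜‖ ^ 2 := by
    rw [(aux19_norm_sq he hpx).tsum_eq.symm]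
    exact tsum_congr fun i => by rw [norm_inner_symm]
  have hny : ‖py‖ ^ 2 = ∑' i, ‖⟪y, e i⟫_𝕜‖ ^ 2 := by
    rw [(aux19_norm_sq he hpy).tsum_eq.symm]
    exact tsum_congr fun i => by rw [norm_inner_symm]
  have hns : ‖s‖ ^ 2 = ∑' i, ‖l i‖ ^ 2 := (aux19_norm_sq he hs).tsum_eq.symm
  have hnt : ‖t‖ ^ 2 = ∑' i, ‖μ i‖ ^ 2 := (aux19_norm_sq he ht).tsum_eq.symm
  -- Pythagoras: ‖x - s‖² = ‖x - px‖² + ‖px - s‖²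
  have hpyth_x : ‖x - px‖ ^ 2 + ‖px - s‖ ^ 2 ≤ r₁ ^ 2 := by
    have hps : HasSum (fun i => (⟪e i, x⟫_𝕜 - l i) • e i) (px - s) := by
      simpa [sub_smul] using hpx.sub hs
    have hperp : ⟪x - px, px - s⟫_𝕜 = 0 := aux19_perp he hps hxperp
    have h3 := norm_add_sq_eq_norm_sq_add_norm_sq_of_inner_eq_zero (x - px) (px - s) hperp
    rw [sub_add_sub_cancel] at h3
    have h4 : ‖x - s‖ ^ 2 ≤ r₁ ^ 2 := pow_le_pow_left₀ (norm_nonneg _) hx 2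
    nlinarith [h3, h4]
  have hpyth_y : ‖y - py‖ ^ 2 + ‖py - t‖ ^ 2 ≤ r₂ ^ 2 := by
    have hps : HasSum (fun i => (⟪e i, y⟫_𝕜 - μ i) • e i) (py - t) := by
      simpa [sub_smul] using hpy.sub ht
    have hperp : ⟪y - py, py - t⟫_𝕜 = 0 := aux19_perp he hps hyperp
    have h3 := norm_add_sq_eq_norm_sq_add_norm_sq_of_inner_eq_zero (y - py) (py - t) hperp
    rw [sub_add_sub_cancel] at h3
    have h4 : ‖y - t‖ ^ 2 ≤ r₂ ^ 2 := pow_le_pow_left₀ (norm_nonneg _) hy 2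
    nlinarith [h3, h4]
  -- key bounds
  have hbound_x : ‖x - px‖ * Real.sqrt ((∑' i, ‖l i‖ ^ 2) - r₁ ^ 2) ≤ r₁ * ‖px‖ := by
    have h2 : ‖s‖ ≤ ‖px‖ + ‖px - s‖ := by
      calc ‖s‖ = ‖px - (px - s)‖ := by rw [sub_sub_cancel]
        _ ≤ ‖px‖ + ‖px - s‖ := norm_sub_le _ _
    have := aux19_real (norm_nonneg (x - px)) (norm_nonneg (px - s)) (norm_nonneg px) hr₁
      (norm_nonneg s) hpyth_x h2 (by rw [hns]; exact hlr)
    rwa [hns] at this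
  have hbound_y : ‖y - py‖ * Real.sqrt ((∑' i, ‖μ i‖ ^ 2) - r₂ ^ 2) ≤ r₂ * ‖py‖ := by
    have h2 : ‖t‖ ≤ ‖py‖ + ‖py - t‖ := by
      calc ‖t‖ = ‖py - (py - t)‖ := by rw [sub_sub_cancel]
        _ ≤ ‖py‖ + ‖py - t‖ := norm_sub_le _ _
    have := aux19_real (norm_nonneg (y - py)) (norm_nonneg (py - t)) (norm_nonneg py) hr₂
      (norm_nonneg t) hpyth_y h2 (by rw [hnt]; exact hμr)
    rwa [hnt] at this
  -- finish
  set A := Real.sqrt ((∑' i, ‖l i‖ ^ 2) - r₁ ^ 2) with hA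
  set B := Real.sqrt ((∑' i, ‖μ i‖ ^ 2) - r₂ ^ 2) with hB
  have hApos : 0 < A := Real.sqrt_pos.mpr (by linarith)
  have hBpos : 0 < B := Real.sqrt_pos.mpr (by linarith)
  have hsq : Real.sqrt ((∑' i, ‖⟪x, e i⟫_𝕜‖ ^ 2) * ∑' i, ‖⟪y, e i⟫_𝕜‖ ^ 2) = ‖px‖ * ‖py‖ := by
    rw [← hnx, ← hny, Real.sqrt_mul (sq_nonneg _), Real.sqrt_sq (norm_nonneg _),
      Real.sqrt_sq (norm_nonneg _)]
  rw [hLHS, hsq]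
  calc ‖⟪x - px, y - py⟫_𝕜‖ ≤ ‖x - px‖ * ‖y - py‖ := norm_inner_le_norm _ _
    _ = (‖x - px‖ * A) * (‖y - py‖ * B) / (A * B) := by
        field_simp
    _ ≤ (r₁ * ‖px‖) * (r₂ * ‖py‖) / (A * B) := by
        have hnum : (‖x - px‖ * A) * (‖y - py‖ * B) ≤ (r₁ * ‖px‖) * (r₂ * ‖py‖) :=
          mul_le_mul hbound_x hbound_y (by positivity) (by positivity)
        exact (div_le_div_iff_of_pos_right (mul_pos hApos hBpos)).mpr hnum
    _ = r₁ * r₂ / (A * B) * (‖px‖ * ‖py‖) := by ring
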